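/- (Setup of Proposition 'semidirectPexp' and Lemma 'lemmaderivativeST') Let 𝔄 be a complete normed ℝ-algebra with unit and bracket [a,b] := ab − ba, let γ, β : ℝ → 𝔄 be continuous, and let g : ℝ → 𝔄 be differentiable with g(t) invertible for all t and g'(t) = g(t)·γ(t) (i.e. g_t = Pexp(∫₀ᵗ γ_s ds)·g₀). Define τ(t) := g(t)⁻¹·(∫₀ᵗ g(s)β(s)g(s)⁻¹ ds)·g(t). Then: (i) t ↦ g(t)τ(t)g(t)⁻¹ is differentiable with derivative g(t)β(t)g(t)⁻¹ (the identity underlying d/dt S_{τF}[(g_t,τ_t),A] = S_{τF}[(g_t,β_t),A]); and (ii) τ is differentiable with τ'(t) = β(t) − [γ(t), τ(t)]. -/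

import Mathlib

/-- **Setup of Proposition `semidirectPexp` and Lemma `lemmaderivativeST`.**  Let `𝔄` be
a complete normed ℝ-algebra with unit and bracket `[a,b] = ab - ba`, let `γ, β : ℝ → 𝔄`
be continuous, and let `g : ℝ → 𝔄` be differentiable with invertible values and
`g' = g·γ` (i.e. `g_t = Pexp(∫₀ᵗ γ_s ds)·g₀`).  Define
`τ(t) := g(t)⁻¹ (∫₀ᵗ g(s) β(s) g(s)⁻¹ ds) g(t)`.  Then:
(i) `t ↦ g(t) τ(t) g(t)⁻¹` is differentiable with derivative `g(t) β(t) g(t)⁻¹`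
(the identity underlying `d/dt S_{τF}[(g_t,τ_t),A] = S_{τF}[(g_t,β_t),A]`); and
(ii) `τ` is differentiable with `τ'(t) = β(t) - [γ(t), τ(t)]`. -/
theorem stmt12
    {𝔄 : Type*} [NormedRing 𝔄] [NormedAlgebra ℝ 𝔄] [CompleteSpace 𝔄]
    (γ β : ℝ → 𝔄)
    (hγ : Continuous γ) (hβ : Continuous β)
    (g : ℝ → 𝔄)
    (hgdiff : Differentiable ℝ g)
    (hgunit : ∀ t : ℝ, IsUnit (g t))
    (hgflow : ∀ t : ℝ, HasDerivAt g (g t * γ t) t)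
    (τ : ℝ → 𝔄)
    (hτ : ∀ t : ℝ, τ t =
      Ring.inverse (g t) * (∫ s in (0:ℝ)..t, g s * β s * Ring.inverse (g s)) * g t) :
    (∀ t : ℝ, HasDerivAt (fun u => g u * τ u * Ring.inverse (g u))
      (g t * β t * Ring.inverse (g t)) t) ∧
    (∀ t : ℝ, HasDerivAt τ (β t - (γ t * τ t - τ t * γ t)) t) := by
  -- derivative of Ring.inverse ∘ g
  have hinv : ∀ t : ℝ, HasDerivAt (fun s => Ring.inverse (g s))
      (-(Ring.inverse (g t) * (g t * γ t) * Ring.inverse (g t))) t := by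
    intro t
    have hu := (hasFDerivAt_ringInverse (𝕜 := ℝ) (hgunit t).unit)
    rw [(hgunit t).unit_spec] at hu
    have := hu.comp_hasDerivAt t (hgflow t)
    simpa [Ring.inverse_unit, (hgunit t).unit_spec, ← Ring.inverse_unit (hgunit t).unit, Function.comp_def] using this
  have hcinv : Continuous fun s => Ring.inverse (g s) :=
    continuous_iff_continuousAt.2 fun t => (hinv t).continuousAt
  set h : ℝ → 𝔄 := fun s => g s * β s * Ring.inverse (g s) with hh
  have hcont : Continuous h := (hgdiff.continuous.mul hβ).mul hcinv
  set F : ℝ → 𝔄 := fun t => ∫ s in (0:ℝ)..t, h s with hF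
  have hFder : ∀ t : ℝ, HasDerivAt F (h t) t := fun t =>
    (hcont.integral_hasStrictDerivAt 0 t).hasDerivAt
  have hmi : ∀ t, Ring.inverse (g t) * g t = 1 := fun t => Ring.inverse_mul_cancel _ (hgunit t)
  have him : ∀ t, g t * Ring.inverse (g t) = 1 := fun t => Ring.mul_inverse_cancel _ (hgunit t)
  have hgτ : (fun u => g u * τ u * Ring.inverse (g u)) = F := by
    funext u
    rw [hτ u]
    calc g u * (Ring.inverse (g u) * F u * g u) * Ring.inverse (g u)
        = (g u * Ring.inverse (g u)) * F u * (g u * Ring.inverse (g u)) := by noncomm_ring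
      _ = F u := by rw [him u]; noncomm_ring
  constructor
  · intro t
    rw [hgτ]
    exact hFder t
  · intro t
    have hτeq : τ = fun u => Ring.inverse (g u) * F u * g u := funext fun u => hτ u
    have hd : HasDerivAt (fun u => Ring.inverse (g u) * F u * g u)
        ((-(Ring.inverse (g t) * (g t * γ t) * Ring.inverse (g t)) * F t
          + Ring.inverse (g t) * h t) * g t
          + Ring.inverse (g t) * F t * (g t * γ t)) t :=
      (((hinv t).mul (hFder t)).mul (hgflow t))
    rw [hτeq]
    convert hd using 1
    rw [hh]
    have e : (-(Ring.inverse (g t) * (g t * γ t) * Ring.inverse (g t)) * F t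
          + Ring.inverse (g t) * (g t * β t * Ring.inverse (g t))) * g t
          + Ring.inverse (g t) * F t * (g t * γ t)
        = -((Ring.inverse (g t) * g t) * γ t
              * (Ring.inverse (g t) * F t * g t))
          + (Ring.inverse (g t) * g t) * β t * (Ring.inverse (g t) * g t)
          + (Ring.inverse (g t) * F t * g t) * γ t := by noncomm_ring
    rw [e, hmi t]
    noncomm_ring
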